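/- Let n ≥ 2, m = n(n−1)/2, B ∈ ℝ^{m×n} the signed vertex-edge incidence matrix of the complete graph on n vertices, S ⊆ {1,…,m} a set of pair indices, and r̄(j) ∈ ℝ a target value for each j ∈ S. Define F(w) = Σ_{j ∈ S} ([R(w)]_{j,j} − r̄(j))², where R(w) = B (Bᵀ diag(w) B)⁺ Bᵀ. Then at every w ∈ ℝ^m with strictly positive entries, F is differentiable and its gradient is ∇F(w) = 2 (R∘R) Δ(w), where ∘ denotes the Hadamard (entrywise) product, R = R(w), and Δ(w) ∈ ℝ^m has entries Δ(w)_j = r̄(j) − [R(w)]_{j,j} for j ∈ S and 0 otherwise; equivalently, ∂F/∂w_i = 2 Σ_{j ∈ S} (r̄(j) − [R(w)]_{j,j}) · ([R(w)]_{i,j})² for each i. -/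

import Mathlib

open Matrix BigOperators Polynomial Filter Topology

/-- The four Penrose conditions characterizing the Moore–Penrose pseudoinverse. -/
def IsMoorePenrose {m k : Type*} [Fintype m] [Fintype k] (M : Matrix m k ℝ)
    (P : Matrix k m ℝ) : Prop :=
  M * P * M = M ∧ P * M * P = P ∧ (M * P)ᵀ = M * P ∧ (P * M)ᵀ = P * M

/- The Moore–Penrose pseudoinverse `M⁺`: it always exists and is unique, so this
choice-based definition picks out exactly the Moore–Penrose pseudoinverse. -/
open Classical in
noncomputable def pinv {m k : Type*} [Fintype m] [Fintype k] (M : Matrix m k ℝ) :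
    Matrix k m ℝ :=
  if h : ∃ P, IsMoorePenrose M P then h.choose else 0

/-- Index type for the unordered pairs `{u,v}`, `u < v`, of vertices of the complete graph
on `n` vertices; there are `n(n-1)/2` of them. -/
abbrev PairIdx (n : ℕ) := {p : Fin n × Fin n // p.1 < p.2}

/-- The signed vertex-edge incidence matrix `B` of the complete graph on `n` vertices:
the row for the pair `{u,v}` (with `u < v`) is `χ_{u,v} = e_u - e_v`. -/
def incB (n : ℕ) : Matrix (PairIdx n) (Fin n) ℝ :=
  Matrix.of fun p i => (if i = p.1.1 then 1 else 0) - (if i = p.1.2 then 1 else 0)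

/-- The entrywise absolute value `|B|` of the incidence matrix `B`. -/
def absB (n : ℕ) : Matrix (PairIdx n) (Fin n) ℝ := (incB n).map fun x => |x|

/-- `L(w) = Bᵀ diag(w) B`, the Laplacian of the weighted graph with edge weights `w`. -/
noncomputable def Lw {n : ℕ} (w : PairIdx n → ℝ) : Matrix (Fin n) (Fin n) ℝ :=
  (incB n)ᵀ * Matrix.diagonal w * incB n

/-- `R(w) = B L(w)⁺ Bᵀ`, whose diagonal entries are the pairwise effective resistances. -/
noncomputable def Rw {n : ℕ} (w : PairIdx n → ℝ) : Matrix (PairIdx n) (PairIdx n) ℝ :=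
  incB n * pinv (Lw w) * (incB n)ᵀ

/-- The least squares objective `F(w) = Σ_{j ∈ S} ([R(w)]_{j,j} - r̄(j))²`. -/
noncomputable def Fobj {n : ℕ} (S : Finset (PairIdx n)) (rbar : PairIdx n → ℝ)
    (w : PairIdx n → ℝ) : ℝ :=
  ∑ j ∈ S, (Rw w j j - rbar j) ^ 2

theorem mp_unique {m k : Type*} [Fintype m] [Fintype k] {M : Matrix m k ℝ}
    {P Q : Matrix k m ℝ} (hP : IsMoorePenrose M P) (hQ : IsMoorePenrose M Q) : P = Q := by
  obtain ⟨hP1, hP2, hP3, hP4⟩ := hP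
  obtain ⟨hQ1, hQ2, hQ3, hQ4⟩ := hQ
  have hPQ : P = P * (M * Q) := by
    calc P = P * (M * P) := by rw [← Matrix.mul_assoc, hP2]
    _ = P * (M * P)ᵀ := by rw [hP3]
    _ = P * (M * Q * M * P)ᵀ := by rw [hQ1]
    _ = P * ((M * P)ᵀ * (M * Q)ᵀ) := by
        rw [← Matrix.transpose_mul]; simp only [Matrix.mul_assoc]
    _ = P * ((M * P) * (M * Q)) := by rw [hP3, hQ3]
    _ = (P * M * P) * (M * Q) := by simp [Matrix.mul_assoc]
    _ = P * (M * Q) := by rw [hP2]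
  have hQP : Q = P * (M * Q) := by
    calc Q = (Q * M) * Q := hQ2.symm
    _ = (Q * M)ᵀ * Q := by rw [hQ4]
    _ = (Q * (M * P * M))ᵀ * Q := by rw [hP1]
    _ = ((P * M)ᵀ * (Q * M)ᵀ) * Q := by
        rw [← Matrix.transpose_mul]; simp only [Matrix.mul_assoc]
    _ = ((P * M) * (Q * M)) * Q := by rw [hP4, hQ4]
    _ = P * (M * (Q * M * Q)) := by simp [Matrix.mul_assoc]
    _ = P * (M * Q) := by rw [hQ2]
  exact hPQ.trans hQP.symm

def Jmat (n : ℕ) : Matrix (Fin n) (Fin n) ℝ := Matrix.of fun _ _ => 1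

noncomputable def Mmat {n : ℕ} (v : PairIdx n → ℝ) : Matrix (Fin n) (Fin n) ℝ :=
  Lw v + (n : ℝ)⁻¹ • Jmat n

lemma Jmat_transpose (n : ℕ) : (Jmat n)ᵀ = Jmat n := rfl

lemma incB_mul_Jmat (n : ℕ) : incB n * Jmat n = 0 := by
  ext p i
  have hne : p.1.1 ≠ p.1.2 := ne_of_lt p.2
  simp [incB, Jmat, Matrix.mul_apply, sub_mul, Finset.sum_sub_distrib]

lemma Jmat_mul_incBT (n : ℕ) : Jmat n * (incB n)ᵀ = 0 := by
  have := congrArg Matrix.transpose (incB_mul_Jmat n)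
  simpa [Matrix.transpose_mul, Jmat_transpose] using this

lemma Lw_mul_Jmat {n : ℕ} (v : PairIdx n → ℝ) : Lw v * Jmat n = 0 := by
  rw [Lw, Matrix.mul_assoc, incB_mul_Jmat, Matrix.mul_zero]

lemma Jmat_mul_Lw {n : ℕ} (v : PairIdx n → ℝ) : Jmat n * Lw v = 0 := by
  rw [Lw, ← Matrix.mul_assoc, ← Matrix.mul_assoc, Jmat_mul_incBT, Matrix.zero_mul,
    Matrix.zero_mul]

lemma Jmat_mul_Jmat (n : ℕ) : Jmat n * Jmat n = (n : ℝ) • Jmat n := by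
  ext i j; simp [Jmat, Matrix.mul_apply]

lemma Lw_transpose {n : ℕ} (v : PairIdx n → ℝ) : (Lw v)ᵀ = Lw v := by
  simp [Lw, Matrix.transpose_mul, Matrix.mul_assoc]

lemma Mmat_transpose {n : ℕ} (v : PairIdx n → ℝ) : (Mmat v)ᵀ = Mmat v := by
  simp [Mmat, Matrix.transpose_add, Lw_transpose, Jmat_transpose]

lemma Mmat_posDef {n : ℕ} (hn : 2 ≤ n) {v : PairIdx n → ℝ} (hv : ∀ i, 0 < v i) :
    (Mmat v).PosDef := by
  have hn0 : (0:ℝ) < n := by positivity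
  rw [Matrix.posDef_iff_dotProduct_mulVec]
  constructor
  · rw [Matrix.IsHermitian]
    simpa using Mmat_transpose v
  · intro x hx
    have hBx : ∀ y : Fin n → ℝ, y ⬝ᵥ Lw v *ᵥ y = ∑ p : PairIdx n, v p * (incB n *ᵥ y) p ^ 2 := by
      intro y
      rw [Lw, ← Matrix.mulVec_mulVec, ← Matrix.mulVec_mulVec, Matrix.dotProduct_mulVec,
        Matrix.vecMul_transpose]
      simp [Matrix.mulVec_diagonal, dotProduct, mul_comm, sq, mul_assoc, mul_left_comm]
    have hJx : ∀ y : Fin n → ℝ, y ⬝ᵥ Jmat n *ᵥ y = (∑ i, y i) ^ 2 := by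
      intro y
      simp [Jmat, Matrix.mulVec, dotProduct, sq, Finset.sum_mul, Finset.mul_sum, mul_comm]
    have key : star x ⬝ᵥ Mmat v *ᵥ x
        = ∑ p : PairIdx n, v p * (incB n *ᵥ x) p ^ 2 + (n:ℝ)⁻¹ * (∑ i, x i) ^ 2 := by
      simp only [Mmat, Matrix.add_mulVec, Matrix.smul_mulVec, dotProduct_add,
        dotProduct_smul, star_trivial]
      rw [hBx, hJx]; simp
    rw [key]
    have h1 : 0 ≤ ∑ p : PairIdx n, v p * (incB n *ᵥ x) p ^ 2 :=
      Finset.sum_nonneg fun p _ => mul_nonneg (hv p).le (sq_nonneg _)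
    have h2 : 0 ≤ (n:ℝ)⁻¹ * (∑ i, x i) ^ 2 := by positivity
    rcases lt_or_eq_of_le h1 with h | h
    · linarith
    rcases lt_or_eq_of_le h2 with h' | h'
    · linarith
    exfalso
    -- both are zero, derive x = 0
    have hterm : ∀ p : PairIdx n, v p * (incB n *ᵥ x) p ^ 2 = 0 := by
      intro p
      have := (Finset.sum_eq_zero_iff_of_nonneg
        (fun p _ => mul_nonneg (hv p).le (sq_nonneg ((incB n *ᵥ x) p)))).mp h.symm
      exact this p (Finset.mem_univ p)
    have hdiff : ∀ p : PairIdx n, x p.1.1 = x p.1.2 := by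
      intro p
      have h0 : (incB n *ᵥ x) p = 0 := by
        have := hterm p
        have hvp := (hv p).ne'
        have : (incB n *ᵥ x) p ^ 2 = 0 := by
          rcases mul_eq_zero.mp this with h | h
          · exact absurd h hvp
          · exact h
        exact pow_eq_zero_iff (by norm_num) |>.mp this
      have : x p.1.1 - x p.1.2 = 0 := by
        simpa [incB, Matrix.mulVec, dotProduct, sub_mul, Finset.sum_sub_distrib] using h0
      linarith
    have hconst : ∀ i j : Fin n, x i = x j := by
      intro i j
      rcases lt_trichotomy i j with h | h | h
      · exact hdiff ⟨(i, j), h⟩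
      · rw [h]
      · exact (hdiff ⟨(j, i), h⟩).symm
    have hsum : (∑ i, x i) = 0 := by
      have : (n:ℝ)⁻¹ ≠ 0 := by positivity
      have h2' := h'.symm
      rcases mul_eq_zero.mp h2' with h | h
      · exact absurd h this
      · exact pow_eq_zero_iff (by norm_num) |>.mp h
    apply hx
    have i0 : Fin n := ⟨0, by omega⟩
    have hix0 : ∀ i, x i = x i0 := fun i => hconst i i0
    have : (∑ _i : Fin n, x i0) = 0 := by
      rw [← hsum]; exact Finset.sum_congr rfl fun i _ => (hix0 i)|>.symm
    rw [Finset.sum_const, Finset.card_univ, Fintype.card_fin] at this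
    have hx0 : x i0 = 0 := by
      have : (n:ℝ) * x i0 = 0 := by simpa [nsmul_eq_mul] using this
      rcases mul_eq_zero.mp this with h | h
      · exact absurd h hn0.ne'
      · exact h
    funext i
    rw [hix0 i, hx0]; rfl

noncomputable def P0 {n : ℕ} (v : PairIdx n → ℝ) : Matrix (Fin n) (Fin n) ℝ :=
  (Mmat v)⁻¹ - (n:ℝ)⁻¹ • Jmat n

section
variable {n : ℕ} (hn : 2 ≤ n) {v : PairIdx n → ℝ} (hv : ∀ i, 0 < v i)
include hn hv
set_option linter.unusedSectionVars false

lemma Mmat_isUnit_det : IsUnit (Mmat v).det :=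
  isUnit_iff_ne_zero.mpr (Mmat_posDef hn hv).det_pos.ne'

lemma Mmat_mul_inv : Mmat v * (Mmat v)⁻¹ = 1 := Matrix.mul_nonsing_inv _ (Mmat_isUnit_det hn hv)
lemma Mmat_inv_mul : (Mmat v)⁻¹ * Mmat v = 1 := Matrix.nonsing_inv_mul _ (Mmat_isUnit_det hn hv)

lemma Mmat_mul_Jmat : Mmat v * Jmat n = Jmat n := by
  have hn0 : (n:ℝ) ≠ 0 := Nat.cast_ne_zero.mpr (by omega)
  rw [Mmat, Matrix.add_mul, Lw_mul_Jmat, Matrix.smul_mul, Jmat_mul_Jmat, zero_add,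
    smul_smul, inv_mul_cancel₀ hn0, one_smul]

lemma Jmat_mul_Mmat : Jmat n * Mmat v = Jmat n := by
  have hn0 : (n:ℝ) ≠ 0 := Nat.cast_ne_zero.mpr (by omega)
  rw [Mmat, Matrix.mul_add, Jmat_mul_Lw, Matrix.mul_smul, Jmat_mul_Jmat, zero_add,
    smul_smul, inv_mul_cancel₀ hn0, one_smul]

lemma Minv_mul_Jmat : (Mmat v)⁻¹ * Jmat n = Jmat n := by
  conv_lhs => rw [← Mmat_mul_Jmat hn hv, ← Matrix.mul_assoc, Mmat_inv_mul hn hv,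
    Matrix.one_mul]

lemma Jmat_mul_Minv : Jmat n * (Mmat v)⁻¹ = Jmat n := by
  conv_lhs => rw [← Jmat_mul_Mmat hn hv, Matrix.mul_assoc, Mmat_mul_inv hn hv,
    Matrix.mul_one]

lemma Lw_mul_Minv : Lw v * (Mmat v)⁻¹ = 1 - (n:ℝ)⁻¹ • Jmat n := by
  have h := Mmat_mul_inv hn hv
  nth_rewrite 1 [Mmat] at h
  rw [Matrix.add_mul, Matrix.smul_mul, Jmat_mul_Minv hn hv] at h
  linear_combination (norm := module) h

lemma Minv_mul_Lw : (Mmat v)⁻¹ * Lw v = 1 - (n:ℝ)⁻¹ • Jmat n := by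
  have h := Mmat_inv_mul hn hv
  nth_rewrite 2 [Mmat] at h
  rw [Matrix.mul_add, Matrix.mul_smul, Minv_mul_Jmat hn hv] at h
  linear_combination (norm := module) h

lemma Lw_mul_P0 : Lw v * P0 v = 1 - (n:ℝ)⁻¹ • Jmat n := by
  rw [P0, Matrix.mul_sub, Matrix.mul_smul, Lw_mul_Jmat, Lw_mul_Minv hn hv, smul_zero, sub_zero]

lemma P0_mul_Lw : P0 v * Lw v = 1 - (n:ℝ)⁻¹ • Jmat n := by
  rw [P0, Matrix.sub_mul, Matrix.smul_mul, Jmat_mul_Lw, Minv_mul_Lw hn hv, smul_zero, sub_zero]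

lemma Jmat_mul_P0 : Jmat n * P0 v = 0 := by
  have hn0 : (n:ℝ) ≠ 0 := Nat.cast_ne_zero.mpr (by omega)
  rw [P0, Matrix.mul_sub, Matrix.mul_smul, Jmat_mul_Minv hn hv, Jmat_mul_Jmat, smul_smul,
    inv_mul_cancel₀ hn0, one_smul, sub_self]

lemma isMP_P0 : IsMoorePenrose (Lw v) (P0 v) := by
  refine ⟨?_, ?_, ?_, ?_⟩
  · rw [Lw_mul_P0 hn hv, Matrix.sub_mul, Matrix.one_mul, Matrix.smul_mul, Jmat_mul_Lw,
      smul_zero, sub_zero]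
  · rw [P0_mul_Lw hn hv, Matrix.sub_mul, Matrix.one_mul, Matrix.smul_mul, Jmat_mul_P0 hn hv,
      smul_zero, sub_zero]
  · rw [Lw_mul_P0 hn hv, Matrix.transpose_sub, Matrix.transpose_one, Matrix.transpose_smul,
      Jmat_transpose]
  · rw [P0_mul_Lw hn hv, Matrix.transpose_sub, Matrix.transpose_one, Matrix.transpose_smul,
      Jmat_transpose]

lemma pinv_Lw_eq : pinv (Lw v) = P0 v := by
  have hex : ∃ P, IsMoorePenrose (Lw v) P := ⟨P0 v, isMP_P0 hn hv⟩
  rw [pinv, dif_pos hex]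
  exact mp_unique hex.choose_spec (isMP_P0 hn hv)

end

attribute [local instance] Matrix.linftyOpNormedAddCommGroup Matrix.linftyOpNormedSpace
  Matrix.linftyOpNormedRing Matrix.linftyOpNormedAlgebra

section
variable {n : ℕ}

lemma Rw_eq (hn : 2 ≤ n) {v : PairIdx n → ℝ} (hv : ∀ i, 0 < v i) :
    Rw v = incB n * (Mmat v)⁻¹ * (incB n)ᵀ := by
  rw [Rw, pinv_Lw_eq hn hv, P0, Matrix.mul_sub, Matrix.mul_smul, incB_mul_Jmat, smul_zero,
    sub_zero]

lemma Rw_symm (hn : 2 ≤ n) {v : PairIdx n → ℝ} (hv : ∀ i, 0 < v i) :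
    (Rw v)ᵀ = Rw v := by
  rw [Rw_eq hn hv]
  simp only [Matrix.transpose_mul, Matrix.transpose_transpose, Matrix.transpose_nonsing_inv,
    Mmat_transpose, ← Matrix.mul_assoc]

/-- The linear map `u ↦ Bᵀ diag(u) B`. -/
noncomputable def dL (n : ℕ) : (PairIdx n → ℝ) →ₗ[ℝ] Matrix (Fin n) (Fin n) ℝ where
  toFun u := (incB n)ᵀ * Matrix.diagonal u * incB n
  map_add' u v := by
    have : Matrix.diagonal (u + v) = Matrix.diagonal u + Matrix.diagonal v := by
      ext i j; by_cases h : i = j <;> simp [Matrix.diagonal, h]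
    simp only [this, Matrix.mul_add, Matrix.add_mul]
  map_smul' c u := by
    have : Matrix.diagonal (c • u) = c • Matrix.diagonal u := by
      ext i j; by_cases h : i = j <;> simp [Matrix.diagonal, h]
    simp only [RingHom.id_apply, this, Matrix.mul_smul, Matrix.smul_mul]

noncomputable def dMC (n : ℕ) : (PairIdx n → ℝ) →L[ℝ] Matrix (Fin n) (Fin n) ℝ :=
  (dL n).toContinuousLinearMap

lemma hMder (w : PairIdx n → ℝ) : HasFDerivAt Mmat (dMC n) w := by
  have h : HasFDerivAt (fun v => dMC n v + (n:ℝ)⁻¹ • Jmat n) (dMC n) w :=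
    (dMC n).hasFDerivAt.add_const _
  convert h using 2
  rfl

/-- The entry functional `X ↦ (B X Bᵀ)_{jj}`. -/
noncomputable def eL (n : ℕ) (j : PairIdx n) :
    Matrix (Fin n) (Fin n) ℝ →ₗ[ℝ] ℝ where
  toFun X := (incB n * X * (incB n)ᵀ) j j
  map_add' X Y := by simp [Matrix.mul_add, Matrix.add_mul]
  map_smul' c X := by simp [Matrix.mul_smul, Matrix.smul_mul]

noncomputable def eC (n : ℕ) (j : PairIdx n) : Matrix (Fin n) (Fin n) ℝ →L[ℝ] ℝ :=
  (eL n j).toContinuousLinearMap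

lemma hInv (hn : 2 ≤ n) {w : PairIdx n → ℝ} (hw : ∀ i, 0 < w i) :
    HasFDerivAt (fun v => (Mmat v)⁻¹)
      ((-(ContinuousLinearMap.mulLeftRight ℝ _ (Mmat w)⁻¹ (Mmat w)⁻¹)).comp (dMC n)) w := by
  obtain ⟨u, hu⟩ := (Mmat_posDef hn hw).isUnit
  have h0 : HasFDerivAt Ring.inverse
      (-(ContinuousLinearMap.mulLeftRight ℝ _ (↑u⁻¹) (↑u⁻¹))) (Mmat w) :=
    hu ▸ hasFDerivAt_ringInverse u
  have hcoe : (↑u⁻¹ : Matrix (Fin n) (Fin n) ℝ) = (Mmat w)⁻¹ := by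
    rw [Matrix.coe_units_inv, hu]
  rw [hcoe] at h0
  have h := h0.comp w (hMder w)
  have hfun : (Ring.inverse ∘ Mmat) = fun v : PairIdx n → ℝ => (Mmat v)⁻¹ := by
    funext v
    simp [Function.comp, Matrix.nonsing_inv_eq_ringInverse]
  rwa [hfun] at h

end

lemma eC_apply (j : PairIdx n) (X : Matrix (Fin n) (Fin n) ℝ) :
    eC n j X = (incB n * X * (incB n)ᵀ) j j := rfl

lemma dMC_apply (u : PairIdx n → ℝ) :
    dMC n u = (incB n)ᵀ * Matrix.diagonal u * incB n := rfl

/-- At every strictly positive weight vector `w`, the objective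
`F(w) = Σ_{j ∈ S} ([R(w)]_{j,j} - r̄(j))²` is differentiable, with gradient
`∇F(w) = 2 (R∘R) Δ(w)`, i.e. `∂F/∂w_i = 2 Σ_{j ∈ S} (r̄(j) - [R(w)]_{j,j})([R(w)]_{i,j})²`
for each coordinate `i`. -/
theorem stmt13 {n : ℕ} (hn : 2 ≤ n) (S : Finset (PairIdx n)) (rbar : PairIdx n → ℝ)
    (w : PairIdx n → ℝ) (hw : ∀ i, 0 < w i) :
    DifferentiableAt ℝ (Fobj S rbar) w ∧
    ∀ i : PairIdx n, fderiv ℝ (Fobj S rbar) w (Pi.single i 1)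
      = 2 * ∑ j ∈ S, (rbar j - Rw w j j) * (Rw w i j) ^ 2 := by
  classical
  set Minv := (Mmat w)⁻¹ with hMinv
  set Dinv := ((-(ContinuousLinearMap.mulLeftRight ℝ _ Minv Minv)).comp (dMC n)) with hDinv
  have hinv := hInv hn hw
  set Rm := incB n * Minv * (incB n)ᵀ with hRm
  have hRweq : Rw w = Rm := Rw_eq hn hw
  -- derivative of each coordinate function
  have hfj : ∀ j : PairIdx n, HasFDerivAt (fun v => eC n j ((Mmat v)⁻¹))
      ((eC n j).comp Dinv) w := fun j => ((eC n j).hasFDerivAt).comp w hinv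
  -- derivative of G
  set G : (PairIdx n → ℝ) → ℝ := fun v => ∑ j ∈ S, (eC n j ((Mmat v)⁻¹) - rbar j) ^ 2 with hGdef
  set Dtot : (PairIdx n → ℝ) →L[ℝ] ℝ :=
    ∑ j ∈ S, (2 * (eC n j Minv - rbar j)) • ((eC n j).comp Dinv) with hDtot
  have hG : HasFDerivAt G Dtot w := by
    apply HasFDerivAt.fun_sum
    intro j _
    have h1 : HasFDerivAt (fun v => eC n j ((Mmat v)⁻¹) - rbar j)
        ((eC n j).comp Dinv) w := (hfj j).sub_const _
    have h2 := h1.mul h1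
    have h3 : (fun v => (eC n j ((Mmat v)⁻¹) - rbar j) ^ 2)
        = fun v => (eC n j ((Mmat v)⁻¹) - rbar j) * (eC n j ((Mmat v)⁻¹) - rbar j) := by
      funext v; ring
    rw [h3]
    refine HasFDerivAt.congr_fderiv h2 ?_
    rw [← add_smul]
    congr 1
    ring
  -- eventual equality
  have hU : IsOpen {v : PairIdx n → ℝ | ∀ i, 0 < v i} := by
    have : {v : PairIdx n → ℝ | ∀ i, 0 < v i} = ⋂ i, {v | 0 < v i} := by
      ext v; simp
    rw [this]
    exact isOpen_iInter_of_finite fun i => isOpen_lt continuous_const (continuous_apply i)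
  have hEq : Fobj S rbar =ᶠ[𝓝 w] G := by
    filter_upwards [hU.mem_nhds hw] with v hv
    unfold G
    rw [Fobj]
    refine Finset.sum_congr rfl fun j _ => ?_
    rw [Rw_eq hn hv, eC_apply]
  have hdiff : DifferentiableAt ℝ (Fobj S rbar) w :=
    hG.differentiableAt.congr_of_eventuallyEq hEq
  refine ⟨hdiff, fun i => ?_⟩
  rw [hEq.fderiv_eq, hG.fderiv]
  -- compute the value
  have hval : ∀ j : PairIdx n, ((eC n j).comp Dinv) (Pi.single i 1) = -(Rm j i * Rm i j) := by
    intro j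
    have hD : Dinv (Pi.single i 1)
        = -(Minv * ((incB n)ᵀ * Matrix.diagonal (Pi.single i (1:ℝ)) * incB n) * Minv) := by
      simp [hDinv, dMC_apply, ContinuousLinearMap.mulLeftRight_apply]
      rfl
    change eC n j (Dinv (Pi.single i 1)) = _
    rw [hD, eC_apply]
    have hassoc : incB n * -(Minv * ((incB n)ᵀ * Matrix.diagonal (Pi.single i (1:ℝ)) * incB n) * Minv)
        * (incB n)ᵀ = -(Rm * Matrix.diagonal (Pi.single i (1:ℝ)) * Rm) := by
      rw [Matrix.mul_neg, Matrix.neg_mul, hRm]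
      congr 1
      simp only [Matrix.mul_assoc]
    rw [hassoc]
    have hentry : (Rm * Matrix.diagonal (Pi.single i (1:ℝ)) * Rm) j j = Rm j i * Rm i j := by
      rw [Matrix.mul_apply]
      rw [Finset.sum_eq_single i]
      · rw [Matrix.mul_diagonal]; simp
      · intro k _ hk
        rw [Matrix.mul_diagonal]
        simp [Pi.single_eq_of_ne hk]
      · simp
    simp [hentry]
  have hsym : ∀ a b : PairIdx n, Rm a b = Rm b a := by
    intro a b
    have := Rw_symm hn hw
    rw [hRweq] at this
    calc Rm a b = Rmᵀ b a := rfl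
    _ = Rm b a := by rw [this]
  rw [hDtot, ContinuousLinearMap.sum_apply, Finset.mul_sum]
  refine Finset.sum_congr rfl fun j _ => ?_
  rw [ContinuousLinearMap.smul_apply, hval j, smul_eq_mul, hRweq, eC_apply, ← hRm,
    hsym j i]
  ring
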